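/- Every k × v Latin rectangle (k ≤ v) can be completed to a v × v Latin square; that is, if R is a k × v array over a v-set Q in which each row is a permutation of Q and each column has k distinct entries, then there is a v × v Latin square whose first k rows equal R. -/
import Mathlib


/-- Every `k × v` Latin rectangle (`k ≤ v`) over a `v`-set `Q` — each row a
permutation of `Q`, no repeats within a column — can be completed to a `v × v`
Latin square whose first `k` rows are the given rectangle. -/
theorem latin_rectangle_completion (k v : ℕ) (hk : k ≤ v)
    (Q : Type) [Fintype Q] [DecidableEq Q] (hQ : Fintype.card Q = v)
    (R : Fin k → Fin v → Q)
    (hrow : ∀ i : Fin k, Function.Bijective (R i))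
    (hcol : ∀ j : Fin v, Function.Injective fun i : Fin k => R i j) :
    ∃ L : Fin v → Fin v → Q,
      (∀ i : Fin v, Function.Bijective (L i)) ∧
      (∀ j : Fin v, Function.Bijective fun i : Fin v => L i j) ∧
      (∀ (i : Fin k) (j : Fin v), L (Fin.castLE hk i) j = R i j) := by
  suffices H : ∀ n : ℕ, ∀ (k : ℕ) (hkn : k + n = v) (R : Fin k → Fin v → Q),
      (∀ i : Fin k, Function.Bijective (R i)) →
      (∀ j : Fin v, Function.Injective fun i : Fin k => R i j) →
      ∃ L : Fin v → Fin v → Q,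
        (∀ i : Fin v, Function.Bijective (L i)) ∧
        (∀ j : Fin v, Function.Injective fun i : Fin v => L i j) ∧
        (∀ (i : Fin k) (j : Fin v), L (Fin.castLE (by omega : k ≤ v) i) j = R i j) by
    obtain ⟨L, hL1, hL2, hL3⟩ := H (v - k) k (by omega) R hrow hcol
    refine ⟨L, hL1, fun j => ?_, hL3⟩
    have : Fintype.card (Fin v) = Fintype.card Q := by simp [hQ]
    exact (Fintype.bijective_iff_injective_and_card _).2 ⟨hL2 j, this⟩
  intro n
  induction n with
  | zero =>
    intro k hkn R hrow hcol
    have hkv : v = k := by omega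
    refine ⟨fun i j => R (Fin.cast hkv i) j, ?_, ?_, ?_⟩
    · intro i
      exact hrow _
    · intro j a b h
      have h2 := congrArg Fin.val (hcol j h)
      simp only [Fin.coe_cast] at h2
      exact Fin.ext h2
    · intro i j
      rfl
  | succ n ih =>
    intro k hkn R hrow hcol
    classical
    -- available symbols for each column
    set t : Fin v → Finset Q :=
      fun j => Finset.univ \ Finset.univ.image (fun i : Fin k => R i j) with ht
    have htcard : ∀ j, (t j).card = n + 1 := by
      intro j
      rw [ht]
      rw [Finset.card_sdiff_of_subset (Finset.subset_univ _),
        Finset.card_image_of_injective _ (hcol j)]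
      simp [hQ]
      omega
    -- each symbol is available in exactly n+1 columns
    have hsym : ∀ q : Q, (Finset.univ.filter fun j : Fin v => q ∈ t j).card = n + 1 := by
      intro q
      have hneg : (Finset.univ.filter fun j : Fin v => ¬ q ∈ t j).card = k := by
        have himg : (Finset.univ.filter fun j : Fin v => ¬ q ∈ t j)
            = Finset.univ.image (fun i : Fin k => (Equiv.ofBijective _ (hrow i)).symm q) := by
          ext j
          simp only [Finset.mem_filter, Finset.mem_univ, true_and, Finset.mem_image, ht,
            Finset.mem_sdiff, not_and, not_not]
          constructor
          · rintro ⟨i, hi⟩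
            refine ⟨i, (hrow i).injective ?_⟩
            have h3 : R i ((Equiv.ofBijective (R i) (hrow i)).symm q) = q :=
              Equiv.ofBijective_apply_symm_apply (R i) (hrow i) q
            rw [h3, hi]
          · rintro ⟨i, rfl⟩
            exact ⟨i, Equiv.ofBijective_apply_symm_apply (R i) (hrow i) q⟩
        rw [himg, Finset.card_image_of_injective, Finset.card_univ, Fintype.card_fin]
        intro a b hab
        have ha : R a ((Equiv.ofBijective (R a) (hrow a)).symm q) = q :=
          Equiv.ofBijective_apply_symm_apply (R a) (hrow a) q
        have hb : R b ((Equiv.ofBijective (R b) (hrow b)).symm q) = q :=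
          Equiv.ofBijective_apply_symm_apply (R b) (hrow b) q
        simp only at hab
        rw [hab] at ha
        exact hcol _ (ha.trans hb.symm)
      have := Finset.card_filter_add_card_filter_not
        (s := (Finset.univ : Finset (Fin v))) (fun j : Fin v => q ∈ t j)
      rw [hneg, Finset.card_univ, Fintype.card_fin] at this
      omega
    -- Hall's condition
    have hall : ∀ s : Finset (Fin v), s.card ≤ (s.biUnion t).card := by
      intro s
      have key : s.card * (n + 1) ≤ (s.biUnion t).card * (n + 1) := by
        calc s.card * (n + 1) = ∑ j ∈ s, (t j).card := by
              rw [Finset.sum_congr rfl (fun j _ => htcard j)]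
              simp [mul_comm]
          _ = ∑ j ∈ s, ∑ q ∈ s.biUnion t, (if q ∈ t j then 1 else 0) := by
              refine Finset.sum_congr rfl (fun j hj => ?_)
              have hsub : t j ⊆ s.biUnion t := Finset.subset_biUnion_of_mem t hj
              rw [← Finset.card_filter]
              congr 1
              rw [Finset.filter_mem_eq_inter, Finset.inter_eq_right.2 hsub]
          _ = ∑ q ∈ s.biUnion t, (s.filter fun j => q ∈ t j).card := by
              rw [Finset.sum_comm]
              refine Finset.sum_congr rfl (fun q hq => ?_)
              rw [Finset.card_filter]
          _ ≤ ∑ q ∈ s.biUnion t, (n + 1) := by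
              refine Finset.sum_le_sum (fun q hq => ?_)
              rw [← hsym q]
              exact Finset.card_le_card (Finset.filter_subset_filter _ (Finset.subset_univ s))
          _ = (s.biUnion t).card * (n + 1) := by simp [mul_comm]
      exact Nat.le_of_mul_le_mul_right key (Nat.succ_pos n)
    obtain ⟨f, hfinj, hft⟩ := (Finset.all_card_le_biUnion_card_iff_exists_injective t).1 hall
    -- new rectangle
    set R' : Fin (k + 1) → Fin v → Q := Fin.snoc R f with hR'
    have hR'c : ∀ (i : Fin k) (j : Fin v), R' (Fin.castSucc i) j = R i j := by
      intro i j; rw [hR']; simp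
    have hR'l : ∀ j : Fin v, R' (Fin.last k) j = f j := by
      intro i; rw [hR']; simp
    have hfnot : ∀ (i : Fin k) (j : Fin v), R i j ≠ f j := by
      intro i j h
      have := hft j
      rw [ht] at this
      simp only [Finset.mem_sdiff, Finset.mem_image, Finset.mem_univ, true_and] at this
      exact this ⟨i, h⟩
    have hrow' : ∀ i : Fin (k + 1), Function.Bijective (R' i) := by
      intro i
      rcases Fin.eq_castSucc_or_eq_last i with ⟨i', rfl⟩ | rfl
      · have : R' (Fin.castSucc i') = R i' := funext (hR'c i')
        rw [this]; exact hrow i'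
      · have : R' (Fin.last k) = f := funext hR'l
        rw [this]
        refine (Fintype.bijective_iff_injective_and_card _).2 ⟨hfinj, by simp [hQ]⟩
    have hcol' : ∀ j : Fin v, Function.Injective fun i : Fin (k + 1) => R' i j := by
      intro j a b hab
      simp only at hab
      rcases Fin.eq_castSucc_or_eq_last a with ⟨a', rfl⟩ | rfl <;>
        rcases Fin.eq_castSucc_or_eq_last b with ⟨b', rfl⟩ | rfl
      · rw [hR'c, hR'c] at hab
        exact congrArg Fin.castSucc (hcol j hab)
      · rw [hR'c, hR'l] at hab; exact absurd hab (hfnot a' j)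
      · rw [hR'c, hR'l] at hab; exact absurd hab.symm (hfnot b' j)
      · rfl
    obtain ⟨L, hL1, hL2, hL3⟩ := ih (k + 1) (by omega) R' hrow' hcol'
    refine ⟨L, hL1, hL2, fun i j => ?_⟩
    have h1 : Fin.castLE (by omega : k ≤ v) i
        = Fin.castLE (by omega : k + 1 ≤ v) (Fin.castSucc i) := by ext; simp
    rw [h1, hL3 (Fin.castSucc i) j, hR'c]
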